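/- arXiv:2101.04971 — 3 statements merged into one kernel-verified Lean document; each statement's English description precedes it below -/
import Mathlib

section
/- Let E be a completely positive super-operator and γ a Hermitian operator with E(γ) = γ. Writing γ = γ⁺ − γ⁻ for the positive and negative parts of γ (from the spectral decomposition), we have E(γ⁺) = γ⁺ and E(γ⁻) = γ⁻, provided E maps positive operators to positive operators and preserves trace on the supports. -/
open Matrix
open scoped ComplexOrder

noncomputable def krausApply {d m : ℕ} (K : Fin m → Matrix (Fin d) (Fin d) ℂ)
    (γ : Matrix (Fin d) (Fin d) ℂ) : Matrix (Fin d) (Fin d) ℂ :=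
  ∑ ℓ, K ℓ * γ * (K ℓ)ᴴ

section SqrtPort

open scoped MatrixOrder

noncomputable def Matrix.PosSemidef.sqrt {d : ℕ} {A : Matrix (Fin d) (Fin d) ℂ}
    (_hA : A.PosSemidef) : Matrix (Fin d) (Fin d) ℂ :=
  CFC.sqrt A

lemma Matrix.PosSemidef.sqrt_mul_self {d : ℕ} {A : Matrix (Fin d) (Fin d) ℂ}
    (hA : A.PosSemidef) : hA.sqrt * hA.sqrt = A :=
  CFC.sqrt_mul_sqrt_self A hA.nonneg

lemma Matrix.PosSemidef.posSemidef_sqrt {d : ℕ} {A : Matrix (Fin d) (Fin d) ℂ}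
    (hA : A.PosSemidef) : hA.sqrt.PosSemidef :=
  nonneg_iff_posSemidef.mp (CFC.sqrt_nonneg A)

end SqrtPort

section Aux

variable {d m : ℕ}

lemma krausApply_sub (K : Fin m → Matrix (Fin d) (Fin d) ℂ)
    (A B : Matrix (Fin d) (Fin d) ℂ) :
    krausApply K (A - B) = krausApply K A - krausApply K B := by
  unfold krausApply
  rw [← Finset.sum_sub_distrib]
  congr 1; ext ℓ; rw [mul_sub, sub_mul]

lemma trace_krausApply (K : Fin m → Matrix (Fin d) (Fin d) ℂ)
    (htp : ∑ ℓ, (K ℓ)ᴴ * K ℓ = 1) (X : Matrix (Fin d) (Fin d) ℂ) :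
    (krausApply K X).trace = X.trace := by
  unfold krausApply
  rw [trace_sum]
  calc ∑ ℓ, (K ℓ * X * (K ℓ)ᴴ).trace = ∑ ℓ, ((K ℓ)ᴴ * K ℓ * X).trace := by
        congr 1; ext ℓ; rw [trace_mul_cycle]
    _ = ((∑ ℓ, (K ℓ)ᴴ * K ℓ) * X).trace := by rw [Finset.sum_mul, trace_sum]
    _ = X.trace := by rw [htp, one_mul]

lemma krausApply_posSemidef (K : Fin m → Matrix (Fin d) (Fin d) ℂ)
    {X : Matrix (Fin d) (Fin d) ℂ} (hX : X.PosSemidef) :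
    (krausApply K X).PosSemidef := by
  unfold krausApply
  refine Finset.sum_induction (fun ℓ => K ℓ * X * (K ℓ)ᴴ) (fun M => M.PosSemidef)
    (fun a b ha hb => ha.add hb) PosSemidef.zero (fun ℓ _ => hX.mul_mul_conjTranspose_same (K ℓ))

lemma psd_diag_nonneg {A : Matrix (Fin d) (Fin d) ℂ} (hA : A.PosSemidef) (i : Fin d) :
    0 ≤ A i i := by
  have := hA.dotProduct_mulVec_nonneg (Pi.single i 1)
  simpa [Matrix.mulVec_single, dotProduct, Pi.single_apply, Finset.sum_ite_eq] using this

lemma psd_trace_nonneg {A : Matrix (Fin d) (Fin d) ℂ} (hA : A.PosSemidef) :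
    0 ≤ A.trace :=
  Finset.sum_nonneg fun i _ => psd_diag_nonneg hA i

lemma psd_trace_zero {A : Matrix (Fin d) (Fin d) ℂ} (hA : A.PosSemidef)
    (h : A.trace = 0) : A = 0 := by
  have hs := hA.sqrt_mul_self
  have hH : hA.sqrtᴴ = hA.sqrt := hA.posSemidef_sqrt.1
  have h2 : ∑ i, ∑ j, star (hA.sqrt j i) * hA.sqrt j i = 0 := by
    have : (hA.sqrtᴴ * hA.sqrt).trace = 0 := by rw [hH, hs, h]
    simpa [Matrix.trace, Matrix.mul_apply, Matrix.diag, Matrix.conjTranspose_apply] using this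
  have hzero : hA.sqrt = 0 := by
    ext j i
    have h3 := (Finset.sum_eq_zero_iff_of_nonneg (fun i _ =>
      Finset.sum_nonneg (fun j _ => star_mul_self_nonneg (hA.sqrt j i)))).mp h2 i (Finset.mem_univ i)
    have h4 := (Finset.sum_eq_zero_iff_of_nonneg (fun j _ =>
      star_mul_self_nonneg (hA.sqrt j i))).mp h3 j (Finset.mem_univ j)
    have h5 : Complex.normSq (hA.sqrt j i) = 0 := by
      rw [mul_comm, Complex.star_def, Complex.mul_conj] at h4
      exact_mod_cast h4
    simpa using Complex.normSq_eq_zero.mp h5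
  rw [← hs, hzero, mul_zero]

lemma trace_mul_psd_nonneg {A B : Matrix (Fin d) (Fin d) ℂ}
    (hA : A.PosSemidef) (hB : B.PosSemidef) : 0 ≤ (A * B).trace := by
  have hH : hA.sqrtᴴ = hA.sqrt := hA.posSemidef_sqrt.1
  calc (0 : ℂ) ≤ (hA.sqrtᴴ * B * hA.sqrt).trace :=
        psd_trace_nonneg (hB.conjTranspose_mul_mul_same _)
    _ = (A * B).trace := by rw [trace_mul_cycle, hH, hA.sqrt_mul_self]

lemma psd_mul_eq_zero_of_conj_eq_zero {A Q : Matrix (Fin d) (Fin d) ℂ}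
    (hA : A.PosSemidef) (hQH : Qᴴ = Q) (h : Q * A * Q = 0) : A * Q = 0 := by
  have hH : hA.sqrtᴴ = hA.sqrt := hA.posSemidef_sqrt.1
  have h1 : (hA.sqrt * Q)ᴴ * (hA.sqrt * Q) = 0 := by
    rw [conjTranspose_mul, hH, hQH]
    calc Q * hA.sqrt * (hA.sqrt * Q) = Q * (hA.sqrt * hA.sqrt) * Q := by
          rw [mul_assoc, mul_assoc, mul_assoc]
      _ = 0 := by rw [hA.sqrt_mul_self, h]
  have h2 : hA.sqrt * Q = 0 := conjTranspose_mul_self_eq_zero.mp h1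
  calc A * Q = hA.sqrt * (hA.sqrt * Q) := by rw [← mul_assoc, hA.sqrt_mul_self]
    _ = 0 := by rw [h2, mul_zero]

end Aux

/-- For a completely positive trace-preserving super-operator `E`, if a Hermitian
operator `γ` is a fixed point of `E`, then the positive part `γ⁺` and negative
part `γ⁻` of its spectral decomposition (characterized by `γ = γ⁺ − γ⁻`, both
positive semidefinite, with orthogonal supports `γ⁺ γ⁻ = 0`) are separately
fixed points of `E`. -/
theorem kraus_fixed_point_pos_neg_parts {d m : ℕ}
    (K : Fin m → Matrix (Fin d) (Fin d) ℂ)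
    (htp : ∑ ℓ, (K ℓ)ᴴ * K ℓ = 1)
    (γ γp γm : Matrix (Fin d) (Fin d) ℂ)
    (hherm : γ.IsHermitian)
    (hfix : krausApply K γ = γ)
    (hdecomp : γ = γp - γm)
    (hp : γp.PosSemidef) (hm : γm.PosSemidef)
    (horth : γp * γm = 0) :
    krausApply K γp = γp ∧ krausApply K γm = γm := by
  classical
  -- notation
  set A := krausApply K γp with hAdef
  set B := krausApply K γm with hBdef
  have hA : A.PosSemidef := krausApply_posSemidef K hp
  have hB : B.PosSemidef := krausApply_posSemidef K hm
  have htrA : A.trace = γp.trace := trace_krausApply K htp γp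
  have htrB : B.trace = γm.trace := trace_krausApply K htp γm
  have hAB : A - B = γp - γm := by
    rw [hAdef, hBdef, ← krausApply_sub, ← hdecomp, hfix, hdecomp]
  -- projection onto the support of γm
  set V : Matrix (Fin d) (Fin d) ℂ := (hm.1.eigenvectorUnitary : Matrix (Fin d) (Fin d) ℂ)
    with hVdef
  set e : Fin d → ℝ := hm.1.eigenvalues with hedef
  set dv : Fin d → ℂ := fun i => if e i = 0 then 0 else 1 with hdvdef
  set Q : Matrix (Fin d) (Fin d) ℂ := V * diagonal dv * Vᴴ with hQdef
  have hVV : Vᴴ * V = 1 := by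
    have := hm.1.eigenvectorUnitary.2
    rw [Matrix.mem_unitaryGroup_iff'] at this
    simpa [hVdef, Matrix.star_eq_conjTranspose] using this
  have hVV' : V * Vᴴ = 1 := by
    have := hm.1.eigenvectorUnitary.2
    rw [Matrix.mem_unitaryGroup_iff] at this
    simpa [hVdef, Matrix.star_eq_conjTranspose] using this
  have hspec : γm = V * diagonal (fun i => (e i : ℂ)) * Vᴴ := by
    have := hm.1.spectral_theorem
    simpa [hVdef, hedef, Matrix.star_eq_conjTranspose, Function.comp_def] using this
  have hQH : Qᴴ = Q := by
    have hdv : star dv = dv := by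
      funext i
      by_cases h : e i = 0 <;> simp [hdvdef, h]
    rw [hQdef, conjTranspose_mul, conjTranspose_mul, conjTranspose_conjTranspose,
      diagonal_conjTranspose, hdv, mul_assoc]
  have hQQ : Q * Q = Q := by
    rw [hQdef]
    calc V * diagonal dv * Vᴴ * (V * diagonal dv * Vᴴ)
        = V * (diagonal dv * (Vᴴ * V) * diagonal dv) * Vᴴ := by
          simp only [mul_assoc]
      _ = V * (diagonal dv * diagonal dv) * Vᴴ := by rw [hVV, mul_one]
      _ = V * diagonal dv * Vᴴ := by
          rw [diagonal_mul_diagonal]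
          congr 2
          ext i j
          by_cases h : e i = 0 <;> simp [Matrix.diagonal, hdvdef, h]
  have hmQ : γm * Q = γm := by
    rw [hspec, hQdef]
    calc V * diagonal (fun i => (e i : ℂ)) * Vᴴ * (V * diagonal dv * Vᴴ)
        = V * (diagonal (fun i => (e i : ℂ)) * (Vᴴ * V) * diagonal dv) * Vᴴ := by
          simp only [mul_assoc]
      _ = V * (diagonal (fun i => (e i : ℂ)) * diagonal dv) * Vᴴ := by rw [hVV, mul_one]
      _ = V * diagonal (fun i => (e i : ℂ)) * Vᴴ := by
          rw [diagonal_mul_diagonal]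
          congr 2
          ext i j
          by_cases h : e i = 0 <;> simp [Matrix.diagonal, hdvdef, h]
  have hQm : Q * γm = γm := by
    have := congrArg conjTranspose hmQ
    rwa [conjTranspose_mul, hQH, hm.1.eq] at this
  have hpQ : γp * Q = 0 := by
    -- M := Vᴴ * γp * V kills the nonzero eigenvalue columns
    set M : Matrix (Fin d) (Fin d) ℂ := Vᴴ * γp * V with hMdef
    have hMD : M * diagonal (fun i => (e i : ℂ)) = 0 := by
      have h0 : Vᴴ * (γp * γm) * V = 0 := by rw [horth, mul_zero, zero_mul]
      rw [hspec] at h0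
      calc M * diagonal (fun i => (e i : ℂ))
          = Vᴴ * γp * V * diagonal (fun i => (e i : ℂ)) * (Vᴴ * V) := by
            rw [hVV, mul_one, hMdef]
        _ = Vᴴ * (γp * (V * diagonal (fun i => (e i : ℂ)) * Vᴴ)) * V := by
            simp only [mul_assoc]
        _ = 0 := h0
    have hMd : M * diagonal dv = 0 := by
      ext i j
      rw [mul_diagonal]
      by_cases h : e j = 0
      · simp [hdvdef, h]
      · have h1 : M i j * (e j : ℂ) = 0 := by
          have := congrFun (congrFun hMD i) j
          simpa [mul_diagonal] using this
        have h2 : (e j : ℂ) ≠ 0 := by exact_mod_cast h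
        simp [hdvdef, h, mul_eq_zero.mp h1 |>.resolve_right h2]
    have hgpV : γp * V = V * M := by
      rw [hMdef]
      calc γp * V = (V * Vᴴ) * γp * V := by rw [hVV', one_mul]
        _ = V * (Vᴴ * γp * V) := by simp only [mul_assoc]
    calc γp * Q = γp * V * diagonal dv * Vᴴ := by
          rw [hQdef]; simp only [mul_assoc]
      _ = V * (M * diagonal dv) * Vᴴ := by rw [hgpV]; simp only [mul_assoc]
      _ = 0 := by rw [hMd, mul_zero, zero_mul]
  have hQp : Q * γp = 0 := by
    have := congrArg conjTranspose hpQ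
    rwa [conjTranspose_mul, hQH, hp.1.eq, conjTranspose_zero] at this
  -- 1 - Q is positive semidefinite
  clear hQdef hVdef hedef hdvdef hspec hVV hVV'
  clear_value Q V e dv
  have h1mQH : (1 - Q)ᴴ = 1 - Q := by rw [conjTranspose_sub, hQH, conjTranspose_one]
  have h1mQ : (1 - Q).PosSemidef := by
    have heq : (1 - Q)ᴴ * (1 - Q) = 1 - Q := by
      rw [h1mQH]
      calc (1 - Q) * (1 - Q) = 1 - Q - Q + Q * Q := by noncomm_ring
        _ = 1 - Q := by rw [hQQ]; abel
    exact heq ▸ posSemidef_conjTranspose_mul_self (1 - Q)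
  -- Q A Q = 0
  have hQAQ : Q * A * Q = 0 := by
    have hQABQ : Q * A * Q + γm = Q * B * Q := by
      have h1 : Q * (A - B) * Q = Q * (γp - γm) * Q := by rw [hAB]
      have h2 : Q * (γp - γm) * Q = -γm := by
        rw [mul_sub, sub_mul, hQp, hQm, hmQ, zero_mul, zero_sub]
      have h3 : Q * (A - B) * Q = Q * A * Q - Q * B * Q := by
        rw [mul_sub, sub_mul]
      rw [h3, h2] at h1
      linear_combination (norm := noncomm_ring) h1
    have hQAQpsd : (Q * A * Q).PosSemidef := by
      have := hA.conjTranspose_mul_mul_same Q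
      rwa [hQH] at this
    have htr1 : (Q * B * Q).trace = (B * Q).trace := by
      rw [trace_mul_cycle, hQQ, trace_mul_comm]
    have htr2 : (B * (1 - Q)).trace = B.trace - (B * Q).trace := by
      rw [mul_sub, mul_one, trace_sub]
    have htr3 : 0 ≤ (B * (1 - Q)).trace := trace_mul_psd_nonneg hB h1mQ
    have h5 := congrArg Matrix.trace hQABQ
    rw [trace_add, htr1] at h5
    have htr6 : (Q * A * Q).trace = -(B * (1 - Q)).trace := by
      linear_combination h5 + htr2 + htrB
    have hle : (Q * A * Q).trace ≤ 0 := by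
      rw [htr6]; exact neg_nonpos.mpr htr3
    exact psd_trace_zero hQAQpsd (le_antisymm hle (psd_trace_nonneg hQAQpsd))
  have hAQ : A * Q = 0 := psd_mul_eq_zero_of_conj_eq_zero hA hQH hQAQ
  have hBQ : B * Q = γm := by
    have h1 : (A - B) * Q = (γp - γm) * Q := by rw [hAB]
    rw [sub_mul, sub_mul, hAQ, hpQ, hmQ, zero_sub, zero_sub] at h1
    exact neg_injective h1
  have hQB : Q * B = γm := by
    have := congrArg conjTranspose hBQ
    rwa [conjTranspose_mul, hQH, hB.1.eq, hm.1.eq] at this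
  have hCeq : (1 - Q) * B * (1 - Q) = B - γm := by
    have h1 : (1 - Q) * B = B - γm := by rw [sub_mul, one_mul, hQB]
    rw [h1, mul_sub, mul_one, sub_mul, hBQ, hmQ, sub_self, sub_zero]
  have hCpsd : (B - γm).PosSemidef := by
    rw [← hCeq]
    have := hB.conjTranspose_mul_mul_same (1 - Q)
    rwa [h1mQH] at this
  have hCtr : (B - γm).trace = 0 := by rw [trace_sub, htrB, sub_self]
  have hBm : B = γm := sub_eq_zero.mp (psd_trace_zero hCpsd hCtr)
  have hAp : A = γp := by
    have h1 := hAB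
    rw [hBm] at h1
    exact sub_left_inj.mp h1
  exact ⟨hAp, hBm⟩
end

section
/- Let E be a completely positive super-operator on a finite-dimensional Hilbert space and ρ a positive operator with E(ρ) = ρ. Then for every unit vector |ψ⟩ in the support of ρ, the support of E(|ψ⟩⟨ψ|) is contained in the support of ρ; that is, supp(ρ) is an invariant (bottom) subspace for E. -/
open Matrix
open scoped ComplexOrder

/-- The support of a positive operator, i.e. the range of the corresponding
linear map. -/
noncomputable def matSupport {d : ℕ} (ρ : Matrix (Fin d) (Fin d) ℂ) :
    Submodule ℂ (Fin d → ℂ) :=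
  LinearMap.range ρ.mulVecLin

namespace InvAux

variable {d : ℕ}

lemma psd_add {A B : Matrix (Fin d) (Fin d) ℂ} (hA : A.PosSemidef) (hB : B.PosSemidef) :
    (A + B).PosSemidef :=
  Matrix.PosSemidef.of_dotProduct_mulVec_nonneg (hA.1.add hB.1) fun x => by
    rw [add_mulVec, dotProduct_add]
    exact add_nonneg (hA.dotProduct_mulVec_nonneg x) (hB.dotProduct_mulVec_nonneg x)

lemma psd_sum {m : ℕ} (f : Fin m → Matrix (Fin d) (Fin d) ℂ) (h : ∀ i, (f i).PosSemidef) :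
    (∑ i, f i).PosSemidef :=
  Finset.sum_induction f _ (fun _ _ ha hb => psd_add ha hb) Matrix.PosSemidef.zero
    (fun i _ => h i)

lemma krausApply_psd {m : ℕ} (K : Fin m → Matrix (Fin d) (Fin d) ℂ)
    {γ : Matrix (Fin d) (Fin d) ℂ} (hγ : γ.PosSemidef) :
    (krausApply K γ).PosSemidef :=
  psd_sum _ fun ℓ => hγ.mul_mul_conjTranspose_same (K ℓ)

lemma krausApply_sub {m : ℕ} (K : Fin m → Matrix (Fin d) (Fin d) ℂ)
    (A B : Matrix (Fin d) (Fin d) ℂ) :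
    krausApply K (A - B) = krausApply K A - krausApply K B := by
  simp [krausApply, mul_sub, sub_mul, Finset.sum_sub_distrib]

lemma krausApply_smul {m : ℕ} (K : Fin m → Matrix (Fin d) (Fin d) ℂ)
    (c : ℂ) (A : Matrix (Fin d) (Fin d) ℂ) :
    krausApply K (c • A) = c • krausApply K A := by
  simp [krausApply, Finset.smul_sum, mul_smul_comm, smul_mul_assoc]

lemma herm_dot_zero {M : Matrix (Fin d) (Fin d) ℂ} (hM : M.IsHermitian)
    {k : Fin d → ℂ} (hk : M *ᵥ k = 0) (z : Fin d → ℂ) :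
    star k ⬝ᵥ (M *ᵥ z) = 0 := by
  have h : star k ᵥ* M = 0 := by
    rw [← hM.eq, ← star_mulVec, hk, star_zero]
  rw [dotProduct_mulVec, h, zero_dotProduct]

lemma range_le_of_psd {A B : Matrix (Fin d) (Fin d) ℂ}
    (hA : A.PosSemidef) (hB : B.PosSemidef) (hBA : (B - A).PosSemidef) :
    LinearMap.range A.mulVecLin ≤ LinearMap.range B.mulVecLin := by
  have hker : ∀ x, B *ᵥ x = 0 → A *ᵥ x = 0 := by
    intro x hx
    have h1 : 0 ≤ star x ⬝ᵥ (A *ᵥ x) := hA.dotProduct_mulVec_nonneg x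
    have h2 : 0 ≤ star x ⬝ᵥ ((B - A) *ᵥ x) := hBA.dotProduct_mulVec_nonneg x
    rw [sub_mulVec, dotProduct_sub, hx, dotProduct_zero, zero_sub] at h2
    exact (hA.dotProduct_mulVec_zero_iff x).mp (le_antisymm (neg_nonneg.mp h2) h1)
  have hdisj : Disjoint (LinearMap.ker B.mulVecLin) (LinearMap.range B.mulVecLin) := by
    rw [Submodule.disjoint_def]
    rintro x hx1 ⟨y, rfl⟩
    have hk : B *ᵥ (B *ᵥ y) = 0 := by simpa [Matrix.mulVecLin_apply] using hx1
    have h0 : star (B *ᵥ y) ⬝ᵥ (B *ᵥ y) = 0 := herm_dot_zero hB.1 hk y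
    simpa [Matrix.mulVecLin_apply] using (dotProduct_star_self_eq_zero).mp h0
  have htop : LinearMap.ker B.mulVecLin ⊔ LinearMap.range B.mulVecLin = ⊤ :=
    Submodule.eq_top_of_disjoint _ _
      (by rw [add_comm]; exact (LinearMap.finrank_range_add_finrank_ker B.mulVecLin).ge) hdisj
  rintro x ⟨y, rfl⟩
  have hx : A.mulVecLin y ∈ LinearMap.ker B.mulVecLin ⊔ LinearMap.range B.mulVecLin := by
    rw [htop]; trivial
  obtain ⟨k, hk, r, hr, hsum⟩ := Submodule.mem_sup.mp hx
  obtain ⟨z, rfl⟩ := hr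
  have hkB : B *ᵥ k = 0 := by simpa [Matrix.mulVecLin_apply] using hk
  have hkA : A *ᵥ k = 0 := hker k hkB
  have h1 : star k ⬝ᵥ (A *ᵥ y) = 0 := herm_dot_zero hA.1 hkA y
  have h2 : star k ⬝ᵥ (B *ᵥ z) = 0 := herm_dot_zero hB.1 hkB z
  have hk0 : k = 0 := by
    have h3 : star k ⬝ᵥ (k + B.mulVecLin z) = star k ⬝ᵥ (A.mulVecLin y) := by rw [hsum]
    rw [dotProduct_add] at h3
    simp only [Matrix.mulVecLin_apply] at h3
    rw [h1, h2, add_zero] at h3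
    exact dotProduct_star_self_eq_zero.mp h3
  rw [hk0, zero_add] at hsum
  exact ⟨z, hsum⟩

lemma vecMulVec_mulVec (w v x : Fin d → ℂ) :
    vecMulVec w v *ᵥ x = (v ⬝ᵥ x) • w := by
  ext i
  simp [vecMulVec_apply, mulVec, dotProduct, Finset.sum_mul, Finset.mul_sum, mul_comm,
    mul_left_comm]

lemma vecMulVec_herm (w : Fin d → ℂ) :
    (vecMulVec w (star w)).IsHermitian := by
  ext i j
  simp [conjTranspose_apply, vecMulVec_apply, mul_comm]

lemma dot_eq_inner (u v : Fin d → ℂ) :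
    star u ⬝ᵥ v = inner ℂ ((WithLp.equiv 2 (Fin d → ℂ)).symm u)
      ((WithLp.equiv 2 (Fin d → ℂ)).symm v) := by
  simp [PiLp.inner_apply, dotProduct, RCLike.inner_apply, mul_comm]

lemma coe_bridge (r : ℝ) : (RCLike.ofReal r : ℂ) = Complex.ofReal r := rfl

lemma rankOne_le_smul_one (w : Fin d → ℂ) :
    (((star w ⬝ᵥ w) • (1 : Matrix (Fin d) (Fin d) ℂ)) - vecMulVec w (star w)).PosSemidef := by
  set ew := (WithLp.equiv 2 (Fin d → ℂ)).symm w with hew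
  refine Matrix.PosSemidef.of_dotProduct_mulVec_nonneg ?_ ?_
  · have h1 : star (star w ⬝ᵥ w) = star w ⬝ᵥ w := by
      rw [star_dotProduct, star_star]
      simp [dotProduct, mul_comm]
    unfold Matrix.IsHermitian
    rw [conjTranspose_sub, conjTranspose_smul, conjTranspose_one, (vecMulVec_herm w).eq, h1]
  · intro x
    set ex := (WithLp.equiv 2 (Fin d → ℂ)).symm x with hex
    have key : star x ⬝ᵥ (((star w ⬝ᵥ w) • (1 : Matrix (Fin d) (Fin d) ℂ)
        - vecMulVec w (star w)) *ᵥ x)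
        = ((‖ew‖ ^ 2 * ‖ex‖ ^ 2 - ‖(inner ℂ ew ex : ℂ)‖ ^ 2 : ℝ) : ℂ) := by
      rw [sub_mulVec, dotProduct_sub, vecMulVec_mulVec, smul_mulVec, one_mulVec,
        dotProduct_smul, dotProduct_smul]
      have hxw : star x ⬝ᵥ w = starRingEnd ℂ (star w ⬝ᵥ x) := by
        rw [dot_eq_inner, dot_eq_inner, ← inner_conj_symm]
      rw [hxw, dot_eq_inner w x, dot_eq_inner w w, dot_eq_inner x x, ← hex, ← hew]
      rw [inner_self_eq_norm_sq_to_K, inner_self_eq_norm_sq_to_K]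
      rw [smul_eq_mul, smul_eq_mul, Complex.mul_conj]
      simp only [coe_bridge]
      push_cast
      rw [Complex.normSq_eq_norm_sq]
      push_cast
      ring
    rw [key]
    rw [Complex.zero_le_real]
    have hcs : ‖(inner ℂ ew ex : ℂ)‖ ≤ ‖ew‖ * ‖ex‖ := norm_inner_le_norm ew ex
    nlinarith [norm_nonneg (inner ℂ ew ex : ℂ), norm_nonneg ew, norm_nonneg ex]

lemma vecMulVec_conj (M : Matrix (Fin d) (Fin d) ℂ) (w : Fin d → ℂ) :
    vecMulVec (M *ᵥ w) (star (M *ᵥ w)) = M * vecMulVec w (star w) * Mᴴ := by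
  rw [vecMulVec_eq Unit, vecMulVec_eq Unit, star_mulVec, replicateCol_mulVec, replicateRow_vecMul]
  simp only [Matrix.mul_assoc]

open scoped MatrixOrder in
set_option maxHeartbeats 1000000 in
lemma key_bound {ρ : Matrix (Fin d) (Fin d) ℂ} (hρ : ρ.PosSemidef)
    {ψ : Fin d → ℂ} (hψ : ψ ∈ matSupport ρ) :
    ∃ c : ℝ, 0 < c ∧ ((c : ℂ) • ρ - vecMulVec ψ (star ψ)).PosSemidef := by
  obtain ⟨v, hv⟩ := hψ
  set s := CFC.sqrt ρ with hs
  have hss : s * s = ρ := CFC.sqrt_mul_sqrt_self ρ hρ.nonneg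
  have hsH : sᴴ = s := (CFC.sqrt_nonneg ρ).posSemidef.1
  set w := s *ᵥ v with hw
  have hψw : ψ = s *ᵥ w := by
    rw [hw, Matrix.mulVec_mulVec, hss, ← hv, Matrix.mulVecLin_apply]
  set c0 : ℝ := ‖(WithLp.equiv 2 (Fin d → ℂ)).symm w‖ ^ 2 with hc0
  have hr : star w ⬝ᵥ w = (c0 : ℂ) := by
    rw [dot_eq_inner, inner_self_eq_norm_sq_to_K, hc0, coe_bridge]
    push_cast
    ring
  have h1 : ((c0 : ℂ) • ρ - vecMulVec ψ (star ψ)).PosSemidef := by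
    have h2 := (rankOne_le_smul_one w).mul_mul_conjTranspose_same s
    have h3 : s * ((star w ⬝ᵥ w) • (1 : Matrix (Fin d) (Fin d) ℂ)
        - vecMulVec w (star w)) * sᴴ = (c0 : ℂ) • ρ - vecMulVec ψ (star ψ) := by
      rw [Matrix.mul_sub, Matrix.sub_mul, hr]
      congr 1
      · rw [mul_smul_comm, smul_mul_assoc, Matrix.mul_one, hsH, hss]
      · rw [← vecMulVec_conj, ← hψw]
    rwa [h3] at h2
  refine ⟨c0 + 1, by positivity, ?_⟩
  have heq : ((c0 + 1 : ℝ) : ℂ) • ρ - vecMulVec ψ (star ψ)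
      = ((c0 : ℂ) • ρ - vecMulVec ψ (star ψ)) + ρ := by
    push_cast
    rw [add_smul, one_smul]
    abel
  rw [heq]
  exact psd_add h1 hρ

end InvAux

/-- If `ρ` is a positive fixed point of a completely positive super-operator `E`,
then for every unit vector `|ψ⟩` in the support of `ρ`, the support of
`E(|ψ⟩⟨ψ|)` is contained in the support of `ρ`: `supp(ρ)` is a bottom
(invariant) subspace for `E`. -/
theorem support_of_fixed_point_is_invariant {d m : ℕ}
    (K : Fin m → Matrix (Fin d) (Fin d) ℂ)
    (ρ : Matrix (Fin d) (Fin d) ℂ) (hρ : ρ.PosSemidef)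
    (hfix : krausApply K ρ = ρ)
    (ψ : Fin d → ℂ) (hψnorm : star ψ ⬝ᵥ ψ = 1)
    (hψ : ψ ∈ matSupport ρ) :
    matSupport (krausApply K (vecMulVec ψ (star ψ))) ≤ matSupport ρ := by
  obtain ⟨c, hcpos, hpsd⟩ := InvAux.key_bound hρ hψ
  have hψψ : (vecMulVec ψ (star ψ)).PosSemidef := by
    refine Matrix.PosSemidef.of_dotProduct_mulVec_nonneg (InvAux.vecMulVec_herm ψ) fun x => ?_
    rw [InvAux.vecMulVec_mulVec, dotProduct_smul, smul_eq_mul]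
    have hxψ : star x ⬝ᵥ ψ = starRingEnd ℂ (star ψ ⬝ᵥ x) := by
      rw [InvAux.dot_eq_inner, InvAux.dot_eq_inner, ← inner_conj_symm]
    rw [hxψ, Complex.mul_conj]
    exact Complex.zero_le_real.mpr (Complex.normSq_nonneg _)
  have hEψ := InvAux.krausApply_psd K hψψ
  have hEb : ((c : ℂ) • ρ - krausApply K (vecMulVec ψ (star ψ))).PosSemidef := by
    have h := InvAux.krausApply_psd K hpsd
    rwa [InvAux.krausApply_sub, InvAux.krausApply_smul, hfix] at h
  have hcρ : ((c : ℂ) • ρ).PosSemidef := by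
    refine Matrix.PosSemidef.of_dotProduct_mulVec_nonneg ?_ ?_
    · unfold Matrix.IsHermitian
      rw [conjTranspose_smul, hρ.1.eq]
      congr 1
      exact Complex.conj_ofReal c
    · intro x
      rw [smul_mulVec, dotProduct_smul, smul_eq_mul]
      exact mul_nonneg (Complex.zero_le_real.mpr hcpos.le) (hρ.dotProduct_mulVec_nonneg x)
  have hle := InvAux.range_le_of_psd hEψ hcρ hEb
  refine le_trans hle ?_
  rintro x ⟨y, rfl⟩
  exact ⟨(c : ℂ) • y, by
    simp [Matrix.mulVecLin_apply, smul_mulVec, Matrix.mulVec_smul]⟩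
end

section
/- Let F be a completely positive super-operator on a finite-dimensional Hilbert space, Γ a subspace containing the supports of all Hermitian fixed points of F and such that F_ℓ Γ ⊆ Γ for all Kraus operators F_ℓ, and P the projection super-operator onto the orthogonal complement Γ⊥ (i.e., P(γ) = P_{Γ⊥} γ P_{Γ⊥}). If Q is a projection super-operator Q(γ) = P_Q γ P_Q with P_Q Γ = 0 (i.e., Γ ⊆ ker P_Q), then for all i ≥ 0: Q ∘ F^i = Q ∘ (F ∘ P)^i. -/
noncomputable def clmKrausApply {d m : ℕ}
    (K : Fin m → (EuclideanSpace ℂ (Fin d) →L[ℂ] EuclideanSpace ℂ (Fin d)))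
    (γ : EuclideanSpace ℂ (Fin d) →L[ℂ] EuclideanSpace ℂ (Fin d)) :
    EuclideanSpace ℂ (Fin d) →L[ℂ] EuclideanSpace ℂ (Fin d) :=
  ∑ ℓ, (K ℓ).comp (γ.comp (ContinuousLinearMap.adjoint (K ℓ)))

/-- The orthogonal projector onto a subspace, as an endomorphism. -/
noncomputable def projCLM {d : ℕ} (Γ : Submodule ℂ (EuclideanSpace ℂ (Fin d))) :
    EuclideanSpace ℂ (Fin d) →L[ℂ] EuclideanSpace ℂ (Fin d) :=
  Γ.subtypeL.comp (Submodule.orthogonalProjection Γ)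

section Aux

variable {d m : ℕ}
  (K : Fin m → (EuclideanSpace ℂ (Fin d) →L[ℂ] EuclideanSpace ℂ (Fin d)))
  (Γ : Submodule ℂ (EuclideanSpace ℂ (Fin d)))

lemma projCLM_sa : ContinuousLinearMap.adjoint (projCLM Γᗮ) = projCLM Γᗮ :=
  (isSelfAdjoint_starProjection Γᗮ).adjoint_eq

lemma projCLM_ker : ∀ ψ ∈ Γ, projCLM Γᗮ ψ = 0 := by
  intro ψ hψ
  have h : ψ ∈ Γᗮᗮ := Submodule.le_orthogonal_orthogonal Γ hψ
  simp [projCLM, Submodule.orthogonalProjectionOnto_apply_of_mem_orthogonal h]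

variable (hinv : ∀ ℓ, ∀ ψ ∈ Γ, K ℓ ψ ∈ Γ)
include hinv

lemma piK (π : EuclideanSpace ℂ (Fin d) →L[ℂ] EuclideanSpace ℂ (Fin d))
    (hk : ∀ ψ ∈ Γ, π ψ = 0) (ℓ : Fin m) :
    (π.comp (K ℓ)).comp (projCLM Γᗮ) = π.comp (K ℓ) := by
  refine ContinuousLinearMap.ext fun v => ?_
  have hmem : v - projCLM Γᗮ v ∈ Γ := by
    have h1 : v - projCLM Γᗮ v ∈ Γᗮᗮ := Submodule.sub_starProjection_mem_orthogonal (K := Γᗮ) v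
    rwa [Submodule.orthogonal_orthogonal] at h1
  have h2 : π (K ℓ (v - projCLM Γᗮ v)) = 0 := hk _ (hinv ℓ _ hmem)
  simp only [map_sub] at h2
  have := sub_eq_zero.mp h2
  simpa [ContinuousLinearMap.comp_apply] using this.symm

lemma Kpi (π : EuclideanSpace ℂ (Fin d) →L[ℂ] EuclideanSpace ℂ (Fin d))
    (hsa : ContinuousLinearMap.adjoint π = π)
    (hk : ∀ ψ ∈ Γ, π ψ = 0) (ℓ : Fin m) :
    (projCLM Γᗮ).comp ((ContinuousLinearMap.adjoint (K ℓ)).comp π) =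
      (ContinuousLinearMap.adjoint (K ℓ)).comp π := by
  have h := congrArg ContinuousLinearMap.adjoint (piK K Γ hinv π hk ℓ)
  simpa [ContinuousLinearMap.adjoint_comp, projCLM_sa, hsa,
    ContinuousLinearMap.comp_assoc] using h

/-- The key single-step identity: `π F(γ) π = π F(P γ P) π`. -/
lemma keyA (π : EuclideanSpace ℂ (Fin d) →L[ℂ] EuclideanSpace ℂ (Fin d))
    (hsa : ContinuousLinearMap.adjoint π = π)
    (hk : ∀ ψ ∈ Γ, π ψ = 0)
    (γ : EuclideanSpace ℂ (Fin d) →L[ℂ] EuclideanSpace ℂ (Fin d)) :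
    π.comp ((clmKrausApply K γ).comp π) =
      π.comp ((clmKrausApply K
        ((projCLM Γᗮ).comp (γ.comp (projCLM Γᗮ)))).comp π) := by
  refine ContinuousLinearMap.ext fun v => ?_
  simp only [clmKrausApply, ContinuousLinearMap.comp_apply,
    ContinuousLinearMap.sum_apply, map_sum]
  refine Finset.sum_congr rfl fun ℓ _ => ?_
  have h1 : ∀ y, π (K ℓ (projCLM Γᗮ y)) = π (K ℓ y) := by
    intro y
    have := congrFun (congrArg DFunLike.coe (piK K Γ hinv π hk ℓ)) y
    simpa [ContinuousLinearMap.comp_apply] using this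
  have h2 : projCLM Γᗮ ((ContinuousLinearMap.adjoint (K ℓ)) (π v)) =
      (ContinuousLinearMap.adjoint (K ℓ)) (π v) := by
    have := congrFun (congrArg DFunLike.coe (Kpi K Γ hinv π hsa hk ℓ)) v
    simpa [ContinuousLinearMap.comp_apply] using this
  rw [h2, h1]

end Aux

/-- Let `F` be completely positive, `Γ` a subspace containing the supports of
all Hermitian fixed points of `F` and invariant under all Kraus operators of
`F`, and `P` the projection super-operator onto `Γ⊥`. If `Q` is a projection
super-operator `Q(γ) = P_Q γ P_Q` with `Γ ⊆ ker P_Q`, then for all `i ≥ 0`,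
`Q ∘ F^i = Q ∘ (F ∘ P)^i`. -/
theorem removal_of_fixed_point_subspace {d m : ℕ}
    (K : Fin m → (EuclideanSpace ℂ (Fin d) →L[ℂ] EuclideanSpace ℂ (Fin d)))
    (Γ : Submodule ℂ (EuclideanSpace ℂ (Fin d)))
    (hsupp : ∀ γ : EuclideanSpace ℂ (Fin d) →L[ℂ] EuclideanSpace ℂ (Fin d),
      ContinuousLinearMap.adjoint γ = γ → clmKrausApply K γ = γ →
        ∀ v, γ v ∈ Γ)
    (hinv : ∀ ℓ, ∀ ψ ∈ Γ, K ℓ ψ ∈ Γ)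
    (PQ : EuclideanSpace ℂ (Fin d) →L[ℂ] EuclideanSpace ℂ (Fin d))
    (hPQsa : ContinuousLinearMap.adjoint PQ = PQ)
    (hPQidem : PQ.comp PQ = PQ)
    (hker : ∀ ψ ∈ Γ, PQ ψ = 0) :
    ∀ i : ℕ,
      (fun γ => PQ.comp (γ.comp PQ)) ∘ (clmKrausApply K)^[i] =
        (fun γ => PQ.comp (γ.comp PQ)) ∘
          (clmKrausApply K ∘
            fun γ => (projCLM Γᗮ).comp (γ.comp (projCLM Γᗮ)))^[i] := by
  set F := clmKrausApply K with hF
  set P : (EuclideanSpace ℂ (Fin d) →L[ℂ] EuclideanSpace ℂ (Fin d)) →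
      (EuclideanSpace ℂ (Fin d) →L[ℂ] EuclideanSpace ℂ (Fin d)) :=
    fun γ => (projCLM Γᗮ).comp (γ.comp (projCLM Γᗮ)) with hP
  -- key one-step identities
  have keyQ : ∀ γ, PQ.comp ((F γ).comp PQ) = PQ.comp ((F (P γ)).comp PQ) :=
    keyA K Γ hinv PQ hPQsa hker
  have keyP : ∀ γ, P (F γ) = P (F (P γ)) :=
    keyA K Γ hinv (projCLM Γᗮ) (projCLM_sa Γ) (projCLM_ker Γ)
  -- propagate through iterates of F ∘ P
  have keyB : ∀ i γ, PQ.comp (((F ∘ P)^[i] (F γ)).comp PQ) =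
      PQ.comp (((F ∘ P)^[i] (F (P γ))).comp PQ) := by
    intro i γ
    cases i with
    | zero => simpa using keyQ γ
    | succ j =>
      have harg : (F ∘ P)^[j + 1] (F γ) = (F ∘ P)^[j + 1] (F (P γ)) := by
        rw [Function.iterate_succ_apply, Function.iterate_succ_apply]
        simp only [Function.comp_apply]
        rw [keyP γ]
      rw [harg]
  intro i
  funext γ
  induction i generalizing γ with
  | zero => rfl
  | succ i ih =>
    simp only [Function.comp_apply] at ih ⊢
    rw [Function.iterate_succ_apply, Function.iterate_succ_apply]
    simp only [Function.comp_apply]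
    rw [ih (F γ), keyB i γ]
end
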